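/- The function y ↦ Σ_{ν=0}^{d₀−1} (−1)^ν (max{d₀y − (n−d₀+ν)T, 0})^{d₀} / (ν!(d₀−ν)! T^{d₀}) is continuous and strictly increasing on ((n−d₀)T/d₀, nT/d₀), tends to 0 as y ↓ (n−d₀)T/d₀ and to 1 as y ↑ nT/d₀; hence it takes every value in (0,1) on this interval. -/

import Mathlib

open Filter Set

noncomputable def F (d : ℕ) (x : ℝ) : ℝ :=
  ∑ ν ∈ Finset.range (d+1),
    (-1:ℝ)^ν * (max (x - ν) 0) ^ d / (Nat.factorial ν * Nat.factorial (d - ν))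

lemma F_continuous (d : ℕ) : Continuous (F d) := by
  unfold F
  apply continuous_finset_sum
  intro ν _
  fun_prop

lemma F_zero (d : ℕ) (hd : 1 ≤ d) (x : ℝ) (hx : x ≤ 0) : F d x = 0 := by
  unfold F
  apply Finset.sum_eq_zero
  intro ν _
  have h : max (x - (ν:ℝ)) 0 = 0 := by
    apply max_eq_right
    have : (0:ℝ) ≤ ν := Nat.cast_nonneg ν
    linarith
  rw [h, zero_pow (by omega), mul_zero, zero_div]

lemma F_one_eq (x : ℝ) : F 1 x = max x 0 - max (x-1) 0 := by
  unfold F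
  simp [Finset.sum_range_succ]
  ring

lemma maxpow_hasDerivAt (m : ℕ) (hm : 2 ≤ m) (t : ℝ) :
    HasDerivAt (fun s : ℝ => (max s 0) ^ m) (m * (max t 0)^(m-1)) t := by
  rcases lt_trichotomy t 0 with ht | ht | ht
  · have hz : (m:ℝ) * (max t 0)^(m-1) = 0 := by
      rw [max_eq_right ht.le, zero_pow (by omega), mul_zero]
    rw [hz]
    have hev : (fun s : ℝ => (max s 0) ^ m) =ᶠ[nhds t] (fun _ => (0:ℝ)) := by
      filter_upwards [eventually_lt_nhds ht] with s hs
      rw [max_eq_right hs.le, zero_pow (by omega)]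
    exact (hasDerivAt_const t 0).congr_of_eventuallyEq hev
  · subst ht
    have hz : (m:ℝ) * (max (0:ℝ) 0)^(m-1) = 0 := by
      rw [max_self, zero_pow (by omega), mul_zero]
    rw [hz, hasDerivAt_iff_tendsto_slope]
    have hbnd : ∀ s : ℝ, ‖slope (fun s : ℝ => (max s 0) ^ m) 0 s‖ ≤ |s| ^ (m-1) := by
      intro s
      have hslope : slope (fun s : ℝ => (max s 0) ^ m) 0 s = (max s 0) ^ m / s := by
        rw [slope_def_field, max_self, zero_pow (show m ≠ 0 by omega), sub_zero, sub_zero]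
      rw [hslope, Real.norm_eq_abs]
      rcases le_or_gt s 0 with hs | hs
      · rw [max_eq_right hs, zero_pow (show m ≠ 0 by omega), zero_div, abs_zero]
        positivity
      · rw [max_eq_left hs.le, abs_div, abs_pow]
        rw [div_le_iff₀ (by positivity : (0:ℝ) < |s|), ← pow_succ]
        apply le_of_eq
        congr 1
        omega
    refine squeeze_zero_norm hbnd ?_
    have : Tendsto (fun s : ℝ => |s| ^ (m-1)) (nhds 0) (nhds 0) := by
      have hc : Continuous (fun s : ℝ => |s| ^ (m-1)) := by fun_prop
      have := hc.tendsto 0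
      simpa [zero_pow (show m - 1 ≠ 0 by omega)] using this
    exact this.mono_left nhdsWithin_le_nhds
  · have hv : (m:ℝ) * (max t 0)^(m-1) = m * t^(m-1) := by rw [max_eq_left ht.le]
    rw [hv]
    have hev : (fun s : ℝ => (max s 0) ^ m) =ᶠ[nhds t] (fun s => s ^ m) := by
      filter_upwards [eventually_gt_nhds ht] with s hs
      rw [max_eq_left hs.le]
    exact (hasDerivAt_pow m t).congr_of_eventuallyEq hev

lemma integral_maxpow (m : ℕ) (hm : 1 ≤ m) (c : ℝ) :
    ∫ u in (0:ℝ)..1, (max (c - u) 0)^m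
      = ((max c 0)^(m+1) - (max (c-1) 0)^(m+1)) / (m+1) := by
  have hderiv : ∀ u ∈ Set.uIcc (0:ℝ) 1,
      HasDerivAt (fun u : ℝ => -(max (c - u) 0)^(m+1) / (m+1)) ((max (c - u) 0)^m) u := by
    intro u _
    have h1 : HasDerivAt (fun u : ℝ => c - u) (-1) u := by
      simpa using HasDerivAt.const_sub c (hasDerivAt_id' u)
    have h2 := (maxpow_hasDerivAt (m+1) (by omega) (c - u)).comp u h1
    have h3 := h2.div_const (-((m:ℝ)+1))
    have hmm : m + 1 - 1 = m := by omega
    rw [hmm] at h3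
    push_cast at h3
    have he : ((m:ℝ)+1) * (max (c-u) 0)^m * (-1) / -((m:ℝ)+1) = (max (c-u) 0)^m := by
      have h0 : ((m:ℝ)+1) ≠ 0 := by positivity
      rw [mul_neg_one, neg_div_neg_eq, mul_div_cancel_left₀ _ h0]
    rw [he] at h3
    refine h3.congr_of_eventuallyEq (Filter.Eventually.of_forall fun v => ?_)
    simp only [Function.comp_apply]
    rw [div_neg, neg_div]
  have hint : IntervalIntegrable (fun u : ℝ => (max (c - u) 0)^m) MeasureTheory.volume 0 1 := by
    apply Continuous.intervalIntegrable
    fun_prop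
  have := intervalIntegral.integral_eq_sub_of_hasDerivAt hderiv hint
  rw [this]
  push_cast
  ring

lemma sum_shift (e : ℕ) (b : ℕ → ℝ) (A : ℕ → ℝ) (hA : A (e+1) = 0) :
    ∑ ν ∈ Finset.range (e+2), (A ν - (if ν = 0 then 0 else A (ν-1))) * b ν
      = ∑ ν ∈ Finset.range (e+1), A ν * (b ν - b (ν+1)) := by
  have h1 : ∑ ν ∈ Finset.range (e+1), A ν * b ν
      = ∑ ν ∈ Finset.range (e+2), A ν * b ν := by
    rw [Finset.sum_range_succ (fun ν => A ν * b ν) (e+1), hA, zero_mul, add_zero]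
  have h2 : ∑ ν ∈ Finset.range (e+1), A ν * b (ν+1)
      = ∑ ν ∈ Finset.range (e+2), (if ν = 0 then 0 else A (ν-1)) * b ν := by
    rw [Finset.sum_range_succ' (fun ν => (if ν = 0 then 0 else A (ν-1)) * b ν) (e+1)]
    simp
  simp only [sub_mul, mul_sub, Finset.sum_sub_distrib]
  rw [h1, h2]

lemma F_rec (e : ℕ) (he : 1 ≤ e) (x : ℝ) :
    F (e+1) x = ∫ u in (0:ℝ)..1, F e (x - u) := by
  have hswap : ∫ u in (0:ℝ)..1, F e (x - u)
      = ∑ ν ∈ Finset.range (e+1), ∫ u in (0:ℝ)..1,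
          (-1:ℝ)^ν * (max (x - u - ν) 0) ^ e / (Nat.factorial ν * Nat.factorial (e - ν)) := by
    rw [← intervalIntegral.integral_finset_sum]
    · rfl
    · intro ν _
      apply Continuous.intervalIntegrable
      fun_prop
  rw [hswap]
  have hterm : ∀ ν : ℕ, ∫ u in (0:ℝ)..1,
        (-1:ℝ)^ν * (max (x - u - ν) 0) ^ e / (Nat.factorial ν * Nat.factorial (e - ν))
      = ((-1:ℝ)^ν / (Nat.factorial ν * Nat.factorial (e - ν) * (e+1)))
          * ((max (x - ν) 0)^(e+1) - (max (x - ν - 1) 0)^(e+1)) := by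
    intro ν
    have : ∀ u : ℝ, (-1:ℝ)^ν * (max (x - u - ν) 0) ^ e / (Nat.factorial ν * Nat.factorial (e - ν))
        = ((-1:ℝ)^ν / (Nat.factorial ν * Nat.factorial (e - ν))) * (max ((x - ν) - u) 0) ^ e := by
      intro u
      rw [show x - u - ν = (x - ν) - u by ring]
      ring
    simp_rw [this]
    rw [intervalIntegral.integral_const_mul, integral_maxpow e he (x - ν)]
    field_simp
  simp_rw [hterm]
  -- now pure algebra
  set b : ℕ → ℝ := fun ν => (max (x - ν) 0)^(e+1) with hb
  have hb1 : ∀ ν : ℕ, (max (x - ν - 1) 0)^(e+1) = b (ν+1) := by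
    intro ν
    rw [hb]
    push_cast
    ring_nf
  set A : ℕ → ℝ := fun ν => if ν ≤ e then (-1:ℝ)^ν / (Nat.factorial ν * Nat.factorial (e - ν) * (e+1)) else 0 with hAdef
  have hrhs : ∑ ν ∈ Finset.range (e+1),
        ((-1:ℝ)^ν / (Nat.factorial ν * Nat.factorial (e - ν) * (e+1)))
          * ((max (x - ν) 0)^(e+1) - (max (x - ν - 1) 0)^(e+1))
      = ∑ ν ∈ Finset.range (e+1), A ν * (b ν - b (ν+1)) := by
    apply Finset.sum_congr rfl
    intro ν hν
    rw [Finset.mem_range] at hν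
    rw [hAdef]
    simp only [if_pos (by omega : ν ≤ e)]
    rw [hb1 ν]
  rw [hrhs, ← sum_shift e b A (by simp [hAdef])]
  unfold F
  apply Finset.sum_congr rfl
  intro ν hν
  rw [Finset.mem_range] at hν
  rw [show (-1:ℝ)^ν * (max (x - ν) 0) ^ (e+1) / (Nat.factorial ν * Nat.factorial (e+1 - ν))
      = ((-1:ℝ)^ν / (Nat.factorial ν * Nat.factorial (e+1 - ν))) * b ν by rw [hb]; ring]
  congr 1
  -- coefficient identity
  match ν, hν with
  | 0, _ =>
    simp [hAdef, Nat.factorial_succ]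
    ring
  | (μ+1), hν =>
    rw [if_neg (by omega : ¬ (μ+1 = 0))]
    simp only [Nat.add_sub_cancel]
    rcases le_or_gt (μ+1) e with hle | hgt
    · rw [hAdef]
      simp only [if_pos hle, if_pos (by omega : μ ≤ e)]
      obtain ⟨k, hk⟩ : ∃ k, e = μ + k ∧ 1 ≤ k := ⟨e - μ, by omega, by omega⟩
      obtain ⟨hk1, hk2⟩ := hk
      subst hk1
      have h1 : μ + k + 1 - (μ + 1) = k := by omega
      have h2 : μ + k - (μ + 1) = k - 1 := by omega
      have h3 : μ + k - μ = k := by omega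
      rw [h1, h2, h3]
      have hf1 : ((μ+1).factorial : ℝ) = (μ+1) * μ.factorial := by
        rw [Nat.factorial_succ]; push_cast; ring
      have hf2 : (k.factorial : ℝ) = k * (k-1).factorial := by
        rw [show k = (k-1) + 1 by omega, Nat.factorial_succ]
        push_cast [show k - 1 + 1 = k from by omega]
        ring
      have hc : ((μ:ℝ) + k + 1) = ((μ + k + 1 : ℕ) : ℝ) := by push_cast; ring
      have hμ0 : (0:ℝ) < μ.factorial := by positivity
      have hk0 : (0:ℝ) < (k-1).factorial := by positivity
      have hkk : (0:ℝ) < (k:ℝ) := by exact_mod_cast hk2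
      rw [hf1, hf2, pow_succ]
      push_cast
      field_simp
      ring
    · have hν1 : μ + 1 = e + 1 := by omega
      rw [hAdef]
      simp only [if_neg (by omega : ¬ (μ+1 ≤ e)), if_pos (by omega : μ ≤ e)]
      have hμe : μ = e := by omega
      subst hμe
      simp only [Nat.sub_self, Nat.factorial_zero]
      rw [pow_succ, Nat.factorial_succ]
      push_cast
      have h0 : (0:ℝ) < μ.factorial := by positivity
      field_simp
      ring

lemma F_main (d : ℕ) (hd : 1 ≤ d) :
    (∀ x : ℝ, (d:ℝ) ≤ x → F d x = 1) ∧
    (∀ a b : ℝ, a < b → a < (d:ℝ) → 0 < b → F d a < F d b) := by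
  induction d, hd using Nat.le_induction with
  | base =>
    constructor
    · intro x hx
      push_cast at hx
      rw [F_one_eq, max_eq_left (by linarith), max_eq_left (by linarith)]
      ring
    · intro a b hab ha hb
      push_cast at ha
      rw [F_one_eq, F_one_eq]
      rcases le_or_gt a 0 with h | h <;> rcases le_or_gt b 1 with h' | h'
      · rw [max_eq_right h, max_eq_right (by linarith : a - 1 ≤ 0),
          max_eq_left hb.le, max_eq_right (by linarith : b - 1 ≤ 0)]
        linarith
      · rw [max_eq_right h, max_eq_right (by linarith : a - 1 ≤ 0),
          max_eq_left (by linarith : (0:ℝ) ≤ b), max_eq_left (by linarith : (0:ℝ) ≤ b - 1)]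
        linarith
      · rw [max_eq_left h.le, max_eq_right (by linarith : a - 1 ≤ 0),
          max_eq_left hb.le, max_eq_right (by linarith : b - 1 ≤ 0)]
        linarith
      · rw [max_eq_left h.le, max_eq_right (by linarith : a - 1 ≤ 0),
          max_eq_left (by linarith : (0:ℝ) ≤ b), max_eq_left (by linarith : (0:ℝ) ≤ b - 1)]
        linarith
  | succ d hd IH =>
    have hmono : Monotone (F d) := by
      intro a b hab
      rcases eq_or_lt_of_le hab with rfl | hab'
      · exact le_rfl
      · rcases le_or_gt b 0 with hb0 | hb0
        · rw [F_zero d hd a (by linarith), F_zero d hd b hb0]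
        · rcases le_or_gt (d:ℝ) a with hda | hda
          · rw [IH.1 a hda, IH.1 b (by linarith)]
          · exact (IH.2 a b hab' hda hb0).le
    have hrec : ∀ x : ℝ, F (d+1) x = ∫ u in (0:ℝ)..1, F d (x - u) := F_rec d hd
    constructor
    · intro x hx
      push_cast at hx
      rw [hrec]
      have heq : Set.EqOn (fun u : ℝ => F d (x - u)) (fun _ => (1:ℝ)) (Set.uIcc 0 1) := by
        intro u hu
        rw [Set.uIcc_of_le (by norm_num : (0:ℝ) ≤ 1)] at hu
        exact IH.1 (x - u) (by have h2 := hu.2; linarith)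
      rw [intervalIntegral.integral_congr heq]
      simp
    · intro a b hab ha hb
      push_cast at ha
      set g : ℝ → ℝ := fun u => F d (b - u) - F d (a - u) with hgdef
      have hca : Continuous (fun u : ℝ => F d (a - u)) :=
        (F_continuous d).comp (by fun_prop)
      have hcb : Continuous (fun u : ℝ => F d (b - u)) :=
        (F_continuous d).comp (by fun_prop)
      have hgc : Continuous g := hcb.sub hca
      have hgnn : ∀ u : ℝ, 0 ≤ g u := by
        intro u
        exact sub_nonneg.2 (hmono (by linarith))
      set u₁ : ℝ := max 0 (a - d) with hu1
      set u₂ : ℝ := min 1 b with hu2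
      have h01 : (0:ℝ) ≤ u₁ := le_max_left _ _
      have h21 : u₂ ≤ 1 := min_le_left _ _
      have h12 : u₁ < u₂ := by
        apply max_lt
        · exact lt_min one_pos hb
        · exact lt_min (by linarith) (by linarith)
      have hint : ∀ p q : ℝ, IntervalIntegrable g MeasureTheory.volume p q :=
        fun p q => hgc.intervalIntegrable p q
      have key : 0 < ∫ u in (0:ℝ)..1, g u := by
        have hsplit1 : (∫ u in (0:ℝ)..u₁, g u) + (∫ u in u₁..(1:ℝ), g u)
            = ∫ u in (0:ℝ)..1, g u :=
          intervalIntegral.integral_add_adjacent_intervals (hint _ _) (hint _ _)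
        have hsplit2 : (∫ u in u₁..u₂, g u) + (∫ u in u₂..(1:ℝ), g u)
            = ∫ u in u₁..(1:ℝ), g u :=
          intervalIntegral.integral_add_adjacent_intervals (hint _ _) (hint _ _)
        have hn1 : 0 ≤ ∫ u in (0:ℝ)..u₁, g u :=
          intervalIntegral.integral_nonneg h01 (fun u _ => hgnn u)
        have hn2 : 0 ≤ ∫ u in u₂..(1:ℝ), g u :=
          intervalIntegral.integral_nonneg h21 (fun u _ => hgnn u)
        have hmid : 0 < ∫ u in u₁..u₂, g u := by
          apply intervalIntegral.intervalIntegral_pos_of_pos_on (hint _ _) _ h12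
          intro u hu
          have hu1' : a - d < u := lt_of_le_of_lt (le_max_right 0 (a - d)) hu.1
          have hu2' : u < b := lt_of_lt_of_le hu.2 (min_le_right 1 b)
          exact sub_pos.2 (IH.2 (a - u) (b - u) (by linarith) (by linarith) (by linarith))
        linarith
      rw [hrec a, hrec b]
      have hsub : (∫ u in (0:ℝ)..1, g u)
          = (∫ u in (0:ℝ)..1, F d (b - u)) - ∫ u in (0:ℝ)..1, F d (a - u) :=
        intervalIntegral.integral_sub (hcb.intervalIntegrable _ _) (hca.intervalIntegrable _ _)
      rw [hsub] at key
      linarith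

/-- The limiting function Σ_{ν=0}^{d₀−1} (−1)^ν (d₀y − (n−d₀+ν)T)₊^{d₀}/(ν!(d₀−ν)! T^{d₀}). -/
noncomputable def limitSum (n d0 : ℕ) (T y : ℝ) : ℝ :=
  ∑ ν ∈ Finset.range d0,
    (-1:ℝ) ^ ν * (max ((d0:ℝ) * y - ((n:ℝ) - d0 + ν) * T) 0) ^ d0 /
      ((Nat.factorial ν) * (Nat.factorial (d0 - ν)) * T ^ d0)

/-- The limiting sum is continuous and strictly increasing on ((n−d₀)T/d₀, nT/d₀),
tends to 0 at the left endpoint and to 1 at the right endpoint, and hence takes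
every value in (0,1) on this interval. -/
theorem limitSum_bijective_onto_unit_interval (n d0 : ℕ) (h1 : 1 ≤ d0) (h2 : d0 ≤ n)
    (T : ℝ) (hT : 0 < T) :
    StrictMonoOn (limitSum n d0 T) (Set.Ioo (((n:ℝ) - d0) * T / d0) ((n:ℝ) * T / d0)) ∧
    ContinuousOn (limitSum n d0 T) (Set.Ioo (((n:ℝ) - d0) * T / d0) ((n:ℝ) * T / d0)) ∧
    Tendsto (limitSum n d0 T)
      (nhdsWithin (((n:ℝ) - d0) * T / d0) (Set.Ioi (((n:ℝ) - d0) * T / d0))) (nhds 0) ∧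
    Tendsto (limitSum n d0 T)
      (nhdsWithin ((n:ℝ) * T / d0) (Set.Iio ((n:ℝ) * T / d0))) (nhds 1) ∧
    ∀ c ∈ Set.Ioo (0:ℝ) 1,
      ∃ y ∈ Set.Ioo (((n:ℝ) - d0) * T / d0) ((n:ℝ) * T / d0), limitSum n d0 T y = c := by
  have hd0 : (0:ℝ) < d0 := by exact_mod_cast h1
  have hd0' : (d0:ℝ) ≠ 0 := ne_of_gt hd0
  have hT' : T ≠ 0 := ne_of_gt hT
  set a : ℝ := ((n:ℝ) - d0) * T / d0 with hadef
  set b : ℝ := (n:ℝ) * T / d0 with hbdef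
  set φ : ℝ → ℝ := fun y => ((d0:ℝ) * y - ((n:ℝ) - d0) * T) / T with hφdef
  have hab : a < b := by
    rw [hadef, hbdef, div_lt_div_iff_of_pos_right hd0]
    nlinarith
  have hφcont : Continuous φ := by fun_prop
  have hφa : φ a = 0 := by
    rw [hφdef, hadef]
    field_simp
    ring
  have hφb : φ b = d0 := by
    rw [hφdef, hbdef]
    field_simp
    ring
  have hφmono : ∀ y1 y2 : ℝ, y1 < y2 → φ y1 < φ y2 := by
    intro y1 y2 h
    rw [hφdef]
    simp only
    rw [div_lt_div_iff_of_pos_right hT]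
    nlinarith
  have hmaxdiv : ∀ z : ℝ, max (z / T) 0 = max z 0 / T := by
    intro z
    rcases le_or_gt z 0 with h | h
    · rw [max_eq_right h, max_eq_right (div_nonpos_iff.2 (Or.inr ⟨h, hT.le⟩)), zero_div]
    · rw [max_eq_left h.le, max_eq_left (div_pos h hT).le]
  have hkey : ∀ y : ℝ, y ≤ b → limitSum n d0 T y = F d0 (φ y) := by
    intro y hy
    have hφyd : φ y ≤ d0 := by
      rw [hφdef]
      simp only
      rw [div_le_iff₀ hT]
      rw [hbdef, le_div_iff₀ hd0] at hy
      nlinarith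
    unfold limitSum F
    rw [Finset.sum_range_succ]
    have hlast : max (φ y - (d0:ℝ)) 0 = 0 := max_eq_right (by linarith)
    rw [hlast, zero_pow (by omega : d0 ≠ 0), mul_zero, zero_div, add_zero]
    apply Finset.sum_congr rfl
    intro ν hν
    have hφν : φ y - (ν:ℝ) = ((d0:ℝ) * y - ((n:ℝ) - d0 + ν) * T) / T := by
      rw [hφdef]
      field_simp
      ring
    rw [hφν, hmaxdiv, div_pow]
    have hTp : T ^ d0 ≠ 0 := pow_ne_zero _ hT'
    have h2 : ((Nat.factorial ν : ℝ) * (Nat.factorial (d0 - ν))) ≠ 0 := by positivity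
    field_simp
  have hcont : Continuous (limitSum n d0 T) := by
    unfold limitSum
    apply continuous_finset_sum
    intro ν _
    fun_prop
  have hF := F_main d0 h1
  have hsm : StrictMonoOn (limitSum n d0 T) (Set.Ioo a b) := by
    intro y1 hy1 y2 hy2 hlt
    rw [hkey y1 hy1.2.le, hkey y2 hy2.2.le]
    apply hF.2 _ _ (hφmono _ _ hlt)
    · rw [← hφb]; exact hφmono _ _ hy1.2
    · rw [← hφa]; exact hφmono _ _ hy2.1
  have hla : limitSum n d0 T a = 0 := by
    rw [hkey a hab.le, hφa]
    exact F_zero d0 h1 0 le_rfl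
  have hlb : limitSum n d0 T b = 1 := by
    rw [hkey b le_rfl, hφb]
    exact hF.1 _ le_rfl
  refine ⟨hsm, hcont.continuousOn, ?_, ?_, ?_⟩
  · have hev : ∀ᶠ y in nhdsWithin a (Set.Ioi a), limitSum n d0 T y = F d0 (φ y) := by
      have : ∀ᶠ y in nhdsWithin a (Set.Ioi a), y < b :=
        (eventually_lt_nhds hab).filter_mono nhdsWithin_le_nhds
      exact this.mono fun y hy => hkey y hy.le
    have ht : Tendsto (fun y => F d0 (φ y)) (nhdsWithin a (Set.Ioi a)) (nhds 0) := by
      have h0 : F d0 (φ a) = 0 := by rw [hφa]; exact F_zero d0 h1 0 le_rfl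
      have hc : Tendsto (fun y => F d0 (φ y)) (nhds a) (nhds (F d0 (φ a))) :=
        ((F_continuous d0).comp hφcont).tendsto a
      rw [h0] at hc
      exact hc.mono_left nhdsWithin_le_nhds
    exact Filter.Tendsto.congr' (EventuallyEq.symm hev) ht
  · have hev : ∀ᶠ y in nhdsWithin b (Set.Iio b), limitSum n d0 T y = F d0 (φ y) :=
      eventually_mem_nhdsWithin.mono fun y hy => hkey y (le_of_lt hy)
    have ht : Tendsto (fun y => F d0 (φ y)) (nhdsWithin b (Set.Iio b)) (nhds 1) := by
      have h0 : F d0 (φ b) = 1 := by rw [hφb]; exact hF.1 _ le_rfl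
      have hc : Tendsto (fun y => F d0 (φ y)) (nhds b) (nhds (F d0 (φ b))) :=
        ((F_continuous d0).comp hφcont).tendsto b
      rw [h0] at hc
      exact hc.mono_left nhdsWithin_le_nhds
    exact Filter.Tendsto.congr' (EventuallyEq.symm hev) ht
  · intro c hc
    have hsub := intermediate_value_Ioo hab.le hcont.continuousOn
    rw [hla, hlb] at hsub
    obtain ⟨y, hy, hyc⟩ := hsub hc
    exact ⟨y, hy, hyc⟩
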